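/- For any bijection φ : ℕ → ℚ, the function G_φ(x) = Σ_{n : φ(n) < x} n^(-2) has derivative 0 at almost every real number (with respect to Lebesgue measure). -/

import Mathlib

open MeasureTheory Filter Set Topology Function

noncomputable def Gphi (φ : ℕ+ → ℚ) (x : ℝ) : ℝ :=
  ∑' n : ℕ+, if (φ n : ℝ) < x then 1 / ((n : ℕ) : ℝ) ^ 2 else 0

namespace GphiAux

open scoped Classical

noncomputable def c (n : ℕ+) : ℝ := 1 / ((n : ℕ) : ℝ) ^ 2

lemma c_nonneg (n : ℕ+) : 0 ≤ c n :=
  one_div_nonneg.2 (pow_nonneg (Nat.cast_nonneg _) 2)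

lemma summable_c : Summable c := by
  have h : Summable (fun n : ℕ => 1 / (n : ℝ) ^ 2) :=
    (Real.summable_one_div_nat_pow).2 one_lt_two
  exact h.comp_injective PNat.coe_injective

lemma summable_ite (p : ℕ+ → Prop) [DecidablePred p] :
    Summable (fun n : ℕ+ => if p n then c n else 0) := by
  refine Summable.of_nonneg_of_le (fun n => ?_) (fun n => ?_) summable_c
  · split <;> simp [c_nonneg]
  · split <;> simp [c_nonneg]

noncomputable def H (φ : ℕ+ → ℚ) (x : ℝ) : ℝ :=
  ∑' n : ℕ+, if (φ n : ℝ) ≤ x then c n else 0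

lemma Gphi_eq (φ : ℕ+ → ℚ) (x : ℝ) :
    Gphi φ x = ∑' n : ℕ+, if (φ n : ℝ) < x then c n else 0 := rfl

lemma mono_Gphi (φ : ℕ+ → ℚ) : Monotone (Gphi φ) := by
  intro x y hxy
  rw [Gphi_eq, Gphi_eq]
  refine Summable.tsum_le_tsum (fun n => ?_) (summable_ite _) (summable_ite _)
  by_cases h : (φ n : ℝ) < x
  · rw [if_pos h, if_pos (h.trans_le hxy)]
  · rw [if_neg h]; split <;> simp [c_nonneg]

lemma H_le_Gphi (φ : ℕ+ → ℚ) {x y : ℝ} (hxy : x < y) : H φ x ≤ Gphi φ y := by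
  rw [Gphi_eq, H]
  refine Summable.tsum_le_tsum (fun n => ?_) (summable_ite _) (summable_ite _)
  by_cases h : (φ n : ℝ) ≤ x
  · rw [if_pos h, if_pos (h.trans_lt hxy)]
  · rw [if_neg h]; split <;> simp [c_nonneg]

lemma tendsto_right (φ : ℕ+ → ℚ) (x : ℝ) :
    Tendsto (Gphi φ) (𝓝[>] x) (𝓝 (H φ x)) := by
  rw [tendsto_order]
  constructor
  · intro b hb
    filter_upwards [self_mem_nhdsWithin] with y hy
    exact hb.trans_le (H_le_Gphi φ hy)
  · intro b hb
    set ε := b - H φ x with hε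
    have hεpos : 0 < ε := sub_pos.2 hb
    -- choose a finset s whose complement tail is small
    have htail := tendsto_tsum_compl_atTop_zero (c)
    have := (htail.eventually (eventually_lt_nhds hεpos)).exists
    obtain ⟨s, hs⟩ := this
    classical
    -- choose y > x such that for n ∈ s, φ n < y → φ n ≤ x
    obtain ⟨y, hxy, hy⟩ : ∃ y, x < y ∧ ∀ n ∈ s, (φ n : ℝ) < y → (φ n : ℝ) ≤ x := by
      set u := s.filter (fun n => x < (φ n : ℝ)) with hu
      rcases u.eq_empty_or_nonempty with h | h
      · refine ⟨x + 1, by linarith, fun n hn _ => ?_⟩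
        by_contra hc
        have : n ∈ u := Finset.mem_filter.2 ⟨hn, lt_of_not_ge hc⟩
        simp [h] at this
      · have himg : (u.image (fun n => (φ n : ℝ))).Nonempty := h.image _
        set m := (u.image (fun n => (φ n : ℝ))).min' himg with hm
        have hxm : x < m := by
          rw [hm, Finset.lt_min'_iff]
          rintro b hb
          obtain ⟨n, hn, rfl⟩ := Finset.mem_image.1 hb
          exact (Finset.mem_filter.1 hn).2
        refine ⟨(x + m) / 2, by linarith, fun n hn hlt => ?_⟩
        by_contra hc
        have hnu : n ∈ u := Finset.mem_filter.2 ⟨hn, lt_of_not_ge hc⟩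
        have : m ≤ (φ n : ℝ) :=
          Finset.min'_le _ _ (Finset.mem_image.2 ⟨n, hnu, rfl⟩)
        linarith
    filter_upwards [Ioo_mem_nhdsGT_of_mem ⟨le_rfl, hxy⟩] with z hz
    obtain ⟨hxz, hzy⟩ := hz
    -- Gphi φ z ≤ H φ x + tail sum
    have key : Gphi φ z - H φ x ≤ ∑' n : {n : ℕ+ // n ∉ s}, c n := by
      have h1 : Gphi φ z - H φ x
          = ∑' n : ℕ+, ((if (φ n : ℝ) < z then c n else 0)
              - (if (φ n : ℝ) ≤ x then c n else 0)) := by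
        rw [Gphi_eq, H, Summable.tsum_sub (summable_ite _) (summable_ite _)]
      rw [h1]
      have hg : Summable (fun n : ℕ+ => if n ∈ s then 0 else c n) := by
        refine Summable.of_nonneg_of_le (fun n => ?_) (fun n => ?_) summable_c
        · split <;> simp [c_nonneg]
        · split <;> simp [c_nonneg]
      have h2 : (∑' n : ℕ+, (if n ∈ s then 0 else c n))
          = ∑' n : {n : ℕ+ // n ∉ s}, c n := by
        rw [← tsum_subtype_eq_of_support_subset (s := {n : ℕ+ | n ∉ s})
          (f := fun n : ℕ+ => if n ∈ s then 0 else c n)]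
        · exact tsum_congr fun n => if_neg n.2
        · intro n hn
          simp only [Function.mem_support, ne_eq] at hn
          by_contra hns
          simp only [Set.mem_setOf_eq, not_not] at hns
          exact hn (if_pos hns)
      rw [← h2]
      refine Summable.tsum_le_tsum (fun n => ?_) ((summable_ite _).sub (summable_ite _)) hg
      by_cases hns : n ∈ s
      · rw [if_pos hns]
        by_cases hlt : (φ n : ℝ) < z
        · rw [if_pos hlt, if_pos (hy n hns (hlt.trans hzy))]
          simp
        · rw [if_neg hlt]
          split <;> simp [c_nonneg]
      · rw [if_neg hns]
        have hA : (if (φ n : ℝ) < z then c n else 0) ≤ c n := by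
          split <;> simp [c_nonneg]
        have hB : (0:ℝ) ≤ (if (φ n : ℝ) ≤ x then c n else 0) := by
          split <;> simp [c_nonneg]
        linarith
    have htails : (∑' n : {n : ℕ+ // n ∉ s}, c n) < ε := hs
    have := H_le_Gphi φ hxz
    linarith

lemma rightLim_Gphi (φ : ℕ+ → ℚ) (x : ℝ) : Function.rightLim (Gphi φ) x = H φ x :=
  rightLim_eq_of_tendsto (tendsto_right φ x)

noncomputable def ν (φ : ℕ+ → ℚ) : Measure ℝ :=
  Measure.sum fun n : ℕ+ => (ENNReal.ofReal (c n)) • Measure.dirac ((φ n : ℝ))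

lemma ν_apply (φ : ℕ+ → ℚ) {s : Set ℝ} (hs : MeasurableSet s) :
    ν φ s = ∑' n : ℕ+, if (φ n : ℝ) ∈ s then ENNReal.ofReal (c n) else 0 := by
  rw [ν, Measure.sum_apply _ hs]
  refine tsum_congr fun n => ?_
  rw [Measure.smul_apply, Measure.dirac_apply' _ hs]
  by_cases h : (φ n : ℝ) ∈ s <;> simp [h, Set.indicator]

lemma H_sub (φ : ℕ+ → ℚ) {a b : ℝ} (hab : a ≤ b) :
    H φ b - H φ a = ∑' n : ℕ+, if (φ n : ℝ) ∈ Set.Ioc a b then c n else 0 := by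
  rw [H, H, ← Summable.tsum_sub (summable_ite _) (summable_ite _)]
  refine tsum_congr fun n => ?_
  by_cases h1 : (φ n : ℝ) ≤ a
  · rw [if_pos h1, if_pos (h1.trans hab),
      if_neg (by simp only [Set.mem_Ioc, not_and]; intro h; linarith)]
    ring
  · rw [if_neg h1]
    by_cases h2 : (φ n : ℝ) ≤ b
    · rw [if_pos h2, if_pos (Set.mem_Ioc.2 ⟨lt_of_not_ge h1, h2⟩)]
      ring
    · rw [if_neg h2, if_neg (fun h => h2 (Set.mem_Ioc.1 h).2)]
      ring

lemma measure_eq (φ : ℕ+ → ℚ) :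
    (mono_Gphi φ).stieltjesFunction.measure = ν φ := by
  refine Measure.ext_of_Ioc' _ _ (fun a b hab => ?_) (fun a b hab => ?_)
  · rw [StieltjesFunction.measure_Ioc]; exact ENNReal.ofReal_ne_top
  · have hst : ∀ x, (mono_Gphi φ).stieltjesFunction x = H φ x := fun x => by
      rw [Monotone.stieltjesFunction_eq, rightLim_Gphi]
    rw [StieltjesFunction.measure_Ioc, hst, hst, H_sub φ hab.le,
      ENNReal.ofReal_tsum_of_nonneg (fun n => by split <;> simp [c_nonneg]) (summable_ite _),
      ν_apply φ measurableSet_Ioc]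
    refine tsum_congr fun n => ?_
    split <;> simp

end GphiAux

theorem stmt4 (φ : ℕ+ → ℚ) (hφ : Function.Bijective φ) :
    ∀ᵐ x : ℝ ∂MeasureTheory.volume, HasDerivAt (Gphi φ) 0 x := by
  classical
  have hS : MeasurableSet (Set.range ((↑) : ℚ → ℝ)) :=
    (Set.countable_range _).measurableSet
  have hsing : (GphiAux.ν φ) ⟂ₘ volume := by
    refine ⟨(Set.range ((↑) : ℚ → ℝ))ᶜ, hS.compl, ?_, ?_⟩
    · rw [GphiAux.ν_apply φ hS.compl]
      rw [ENNReal.tsum_eq_zero]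
      exact fun n => if_neg (fun h => h ⟨φ n, rfl⟩)
    · rw [compl_compl]
      exact (Set.countable_range _).measure_zero _
  have hrn := hsing.rnDeriv_ae_eq_zero
  filter_upwards [(GphiAux.mono_Gphi φ).ae_hasDerivAt, hrn] with x hx h0
  rw [GphiAux.measure_eq] at hx
  rw [h0] at hx
  simpa using hx
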